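/- Let f be a homeomorphism of a compact metric space whose non-wandering set is a finite disjoint union of closed invariant sets Λ₁, …, Λ_m. If x is a point whose ω-limit set is contained in the union of the Λ_i, then there is a unique index i such that ω(x) ⊆ Λ_i. -/
import Mathlib


open Filter Topology Set

/-- The ω-limit set of `x` under a homeomorphism `f`. -/
def omegaSet {X : Type*} [TopologicalSpace X] (f : X ≃ₜ X) (x : X) : Set X :=
  {y | ∃ φ : ℕ → ℕ, StrictMono φ ∧ Tendsto (fun n => (⇑f)^[φ n] x) atTop (𝓝 y)}

/-- The non-wandering set of a homeomorphism `f`. -/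
def nonWanderingSet {X : Type*} [TopologicalSpace X] (f : X ≃ₜ X) : Set X :=
  {p | ∀ U ∈ 𝓝 p, ∃ n : ℕ, 1 ≤ n ∧ ((⇑f)^[n] '' U ∩ U).Nonempty}

/-- If a predicate holds at `a` and fails at `b ≥ a`, there is an "exit time". -/
lemma exists_exit (p : ℕ → Prop) : ∀ b a, a ≤ b → p a → ¬ p b →
    ∃ k, a ≤ k ∧ p k ∧ ¬ p (k + 1) := by
  intro b
  induction b with
  | zero =>
    intro a h ha hb
    obtain rfl := Nat.le_zero.mp h
    exact absurd ha hb
  | succ n ih =>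
    intro a h ha hb
    rcases Nat.lt_or_ge a (n + 1) with h' | h'
    · by_cases hpn : p n
      · exact ⟨n, by omega, hpn, hb⟩
      · exact ih a (by omega) ha hpn
    · have : a = n + 1 := by omega
      exact absurd (this ▸ ha) hb

/-- A point of the ω-limit set in an open set gives frequent visits of the orbit. -/
lemma frequently_mem_of_omega {X : Type*} [TopologicalSpace X] (f : X ≃ₜ X) (x y : X)
    (hy : y ∈ omegaSet f x) (U : Set X) (hU : IsOpen U) (hyU : y ∈ U) :
    ∃ᶠ n in atTop, (⇑f)^[n] x ∈ U := by
  obtain ⟨φ, hφ, hlim⟩ := hy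
  have hev : ∀ᶠ n in atTop, (⇑f)^[φ n] x ∈ U := hlim.eventually (hU.mem_nhds hyU)
  rw [eventually_atTop] at hev
  obtain ⟨M, hM⟩ := hev
  rw [frequently_atTop]
  intro N
  exact ⟨φ (max M N), le_trans (le_max_right M N) (hφ.le_apply), hM _ (le_max_left M N)⟩

/-- Let `f` be a homeomorphism of a compact metric space whose non-wandering set is
a finite disjoint union of closed invariant sets `Λ₁, …, Λ_m`. If the ω-limit set
of `x` is contained in the union of the `Λ i`, then there is a unique index `i`
with `ω(x) ⊆ Λ i`. -/
theorem omegaSet_subset_unique_basic_set {X : Type*} [MetricSpace X] [CompactSpace X]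
    (f : X ≃ₜ X) (m : ℕ) (Λ : Fin m → Set X)
    (hclosed : ∀ i, IsClosed (Λ i)) (hinv : ∀ i, f '' Λ i = Λ i)
    (hdisj : Pairwise (Function.onFun Disjoint Λ))
    (hNW : nonWanderingSet f = ⋃ i, Λ i)
    (x : X) (hx : omegaSet f x ⊆ ⋃ i, Λ i) :
    ∃! i : Fin m, omegaSet f x ⊆ Λ i := by
  -- the ω-limit set is nonempty by compactness
  have hne : (omegaSet f x).Nonempty := by
    obtain ⟨y, -, φ, hφ, hlim⟩ :=
      isCompact_univ.tendsto_subseq (x := fun n => (⇑f)^[n] x) (fun n => mem_univ _)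
    exact ⟨y, φ, hφ, hlim⟩
  obtain ⟨y, hy⟩ := hne
  obtain ⟨i, hi⟩ := mem_iUnion.mp (hx hy)
  -- the union of the other basic sets
  set K : Set X := ⋃ j ∈ ({i}ᶜ : Set (Fin m)), Λ j with hK
  have hKclosed : IsClosed K :=
    Set.Finite.isClosed_biUnion (Set.toFinite _) (fun j _ => hclosed j)
  have hΛKc : Λ i ⊆ Kᶜ := by
    intro z hz hzK
    obtain ⟨j, hj, hzj⟩ := mem_iUnion₂.mp hzK
    exact (hdisj (Ne.symm hj)).le_bot ⟨hz, hzj⟩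
  -- separate Λ i from K by an open set with closure avoiding K
  obtain ⟨U, hUopen, hΛU, hclU⟩ :=
    normal_exists_closure_subset (hclosed i) hKclosed.isOpen_compl hΛKc
  have hsub : omegaSet f x ⊆ Λ i := by
    intro z hz
    by_contra hzΛ
    obtain ⟨j, hj⟩ := mem_iUnion.mp (hx hz)
    have hji : j ≠ i := fun h => hzΛ (h ▸ hj)
    have hzK : z ∈ K := mem_iUnion₂.mpr ⟨j, hji, hj⟩
    have hzU : z ∉ closure U := fun h => (hclU h) hzK
    -- the orbit is frequently in U and frequently outside U
    have hfreqU : ∃ᶠ n in atTop, (⇑f)^[n] x ∈ U :=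
      frequently_mem_of_omega f x y hy U hUopen (hΛU hi)
    have hfreqV : ∃ᶠ n in atTop, (⇑f)^[n] x ∉ U := by
      have := frequently_mem_of_omega f x z hz (closure U)ᶜ isClosed_closure.isOpen_compl hzU
      exact this.mono (fun n hn hnU => hn (subset_closure hnU))
    -- hence there are infinitely many exit times
    have hfreqS : ∃ᶠ n in atTop, (⇑f)^[n] x ∈ U ∧ (⇑f)^[n + 1] x ∉ U := by
      rw [frequently_atTop] at hfreqU hfreqV ⊢
      intro N
      obtain ⟨a, haN, haU⟩ := hfreqU N
      obtain ⟨b, hab, hbU⟩ := hfreqV (a + 1)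
      obtain ⟨k, hak, hkU, hk1⟩ :=
        exists_exit (fun n => (⇑f)^[n] x ∈ U) b a (by omega) haU hbU
      exact ⟨k, le_trans haN hak, hkU, hk1⟩
    obtain ⟨ψ, hψ, hψS⟩ := Filter.extraction_of_frequently_atTop hfreqS
    obtain ⟨w, -, σ, hσ, hwlim⟩ :=
      isCompact_univ.tendsto_subseq (x := fun n => (⇑f)^[ψ n] x) (fun n => mem_univ _)
    have hwω : w ∈ omegaSet f x := ⟨ψ ∘ σ, hψ.comp hσ, hwlim⟩
    have hwcl : w ∈ closure U :=
      mem_closure_of_tendsto hwlim (Eventually.of_forall fun n => (hψS (σ n)).1)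
    obtain ⟨i', hi'⟩ := mem_iUnion.mp (hx hwω)
    have hii' : i' = i := by
      by_contra hne'
      exact (hclU hwcl) (mem_iUnion₂.mpr ⟨i', hne', hi'⟩)
    have hwΛ : w ∈ Λ i := hii' ▸ hi'
    have hfw : f w ∈ Λ i := (hinv i) ▸ mem_image_of_mem f hwΛ
    have hlim' : Tendsto (fun n => (⇑f)^[ψ (σ n) + 1] x) atTop (𝓝 (f w)) := by
      have := (f.continuous.tendsto w).comp hwlim
      simpa [Function.comp_def, Function.iterate_succ_apply'] using this
    have hev := hlim'.eventually (hUopen.mem_nhds (hΛU hfw))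
    rw [eventually_atTop] at hev
    obtain ⟨N, hN⟩ := hev
    exact (hψS (σ N)).2 (hN N le_rfl)
  refine ⟨i, hsub, fun j hj => ?_⟩
  by_contra hji
  exact (hdisj hji).le_bot ⟨hj hy, hsub hy⟩
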